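/- Let M ∈ Sym(k) have eigenvalues m₁ ≤ m₂ ≤ … ≤ m_k, and assume that r of them are nonpositive, i.e., m_r ≤ 0. Let S ∈ ℝ^{k×d} have orthonormal columns spanning a d-dimensional subspace 𝒮 of ℝ^k, and let M̃ = SᵀMS have eigenvalues m̃₁ ≤ m̃₂ ≤ … ≤ m̃_d. If r − k + d ≥ 1, then m̃₁ ≤ m̃₂ ≤ … ≤ m̃_{r−k+d} ≤ m_r ≤ 0. Moreover, if in addition m̃₁ = 0, then dim(𝒮 ∩ ker(M)) ≥ r − k + d. -/

import Mathlib

set_option maxHeartbeats 1000000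

open Matrix

private lemma dotProduct_sum' {N n : ℕ} (v : Fin N → ℝ) (f : Fin n → Fin N → ℝ) :
    v ⬝ᵥ (∑ i, f i) = ∑ i, v ⬝ᵥ f i := by
  simp only [dotProduct, Finset.sum_apply, Finset.mul_sum]
  exact Finset.sum_comm

private lemma sum_dotProduct' {N n : ℕ} (v : Fin N → ℝ) (f : Fin n → Fin N → ℝ) :
    (∑ i, f i) ⬝ᵥ v = ∑ i, f i ⬝ᵥ v := by
  simp only [dotProduct, Finset.sum_apply, Finset.sum_mul]
  exact Finset.sum_comm

private lemma on_li {n N : ℕ} {v : Fin n → Fin N → ℝ}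
    (h : ∀ i j, v i ⬝ᵥ v j = if i = j then (1 : ℝ) else 0) :
    LinearIndependent ℝ v := by
  rw [Fintype.linearIndependent_iff]
  intro g hg i
  have h2 : v i ⬝ᵥ ∑ j, g j • v j = 0 := by rw [hg, dotProduct_zero]
  rw [dotProduct_sum'] at h2
  simpa [dotProduct_smul, h, mul_ite] using h2

private lemma quad {n N : ℕ} (A : Matrix (Fin N) (Fin N) ℝ) {v : Fin n → Fin N → ℝ}
    (h : ∀ i j, v i ⬝ᵥ v j = if i = j then (1 : ℝ) else 0)
    (μ : Fin n → ℝ) (he : ∀ i, A *ᵥ v i = μ i • v i) (c : Fin n → ℝ) :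
    (∑ j, c j • v j) ⬝ᵥ (A *ᵥ ∑ j, c j • v j) = ∑ j, μ j * (c j) ^ 2 := by
  have h1 : A *ᵥ ∑ j, c j • v j = ∑ j, (μ j * c j) • v j := by
    rw [← mulVecLin_apply, map_sum]
    refine Finset.sum_congr rfl fun j _ => ?_
    rw [LinearMap.map_smul, mulVecLin_apply, he, smul_smul, mul_comm (c j) (μ j)]
  rw [h1, sum_dotProduct']
  have h2 : ∀ s : Fin n, (c s • v s) ⬝ᵥ (∑ j, (μ j * c j) • v j) = μ s * (c s) ^ 2 := by
    intro s
    rw [dotProduct_sum']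
    simp only [smul_dotProduct, dotProduct_smul, h, smul_eq_mul, mul_ite, mul_one, mul_zero]
    rw [Finset.sum_ite_eq Finset.univ s]
    simp only [Finset.mem_univ, if_true]
    ring
  rw [Finset.sum_congr rfl fun s _ => h2 s]

private lemma normsq {n N : ℕ} {v : Fin n → Fin N → ℝ}
    (h : ∀ i j, v i ⬝ᵥ v j = if i = j then (1 : ℝ) else 0) (c : Fin n → ℝ) :
    (∑ j, c j • v j) ⬝ᵥ (∑ j, c j • v j) = ∑ j, (c j) ^ 2 := by
  have := quad (1 : Matrix (Fin N) (Fin N) ℝ) h (fun _ => (1 : ℝ))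
    (fun i => by rw [one_mulVec, one_smul]) c
  rw [one_mulVec] at this
  simpa using this

theorem statement_12 {k d : ℕ} (hd : 1 ≤ d) (hdk : d ≤ k)
    (M : Matrix (Fin k) (Fin k) ℝ) (hM : M.IsSymm)
    -- sorted spectral decomposition of M
    (m : Fin k → ℝ) (w : Fin k → Fin k → ℝ)
    (hmono : Monotone m)
    (horth : ∀ i j, w i ⬝ᵥ w j = if i = j then (1 : ℝ) else 0)
    (heig : ∀ i, M *ᵥ w i = m i • w i)
    -- r of the eigenvalues are nonpositive
    (r : ℕ) (hr1 : 1 ≤ r) (hrk : r ≤ k)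
    (hmr : m ⟨r - 1, by omega⟩ ≤ 0)
    -- S has orthonormal columns spanning the subspace 𝒮
    (S : Matrix (Fin k) (Fin d) ℝ) (hS : Sᵀ * S = 1)
    -- sorted spectral decomposition of the compression M̃ = SᵀMS
    (m' : Fin d → ℝ) (w' : Fin d → Fin d → ℝ)
    (hmono' : Monotone m')
    (horth' : ∀ i j, w' i ⬝ᵥ w' j = if i = j then (1 : ℝ) else 0)
    (heig' : ∀ i, (Sᵀ * M * S) *ᵥ w' i = m' i • w' i)
    (hrd : k < r + d) :
    (∀ i : Fin d, (i : ℕ) < r + d - k → m' i ≤ m ⟨r - 1, by omega⟩) ∧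
    (m' ⟨0, by omega⟩ = 0 →
      r + d - k ≤ Module.finrank ℝ
        ↥(LinearMap.range (Matrix.mulVecLin S) ⊓ LinearMap.ker (Matrix.mulVecLin M))) := by
  -- shared facts
  have hSdot : ∀ (a : Fin d → ℝ) (y : Fin k → ℝ),
      (S *ᵥ a) ⬝ᵥ y = a ⬝ᵥ (Sᵀ *ᵥ y) := by
    intro a y
    calc (S *ᵥ a) ⬝ᵥ y = y ⬝ᵥ (S *ᵥ a) := dotProduct_comm _ _
      _ = (y ᵥ* S) ⬝ᵥ a := dotProduct_mulVec _ _ _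
      _ = (Sᵀ *ᵥ y) ⬝ᵥ a := by
          rw [show y ᵥ* S = Sᵀ *ᵥ y from by
            rw [← vecMul_transpose Sᵀ y, transpose_transpose]]
      _ = a ⬝ᵥ (Sᵀ *ᵥ y) := dotProduct_comm _ _
  have hSS : ∀ a b : Fin d → ℝ, (S *ᵥ a) ⬝ᵥ (S *ᵥ b) = a ⬝ᵥ b := by
    intro a b
    rw [hSdot, mulVec_mulVec, hS, one_mulVec]
  have hquadS : ∀ u : Fin d → ℝ,
      (S *ᵥ u) ⬝ᵥ (M *ᵥ (S *ᵥ u)) = u ⬝ᵥ ((Sᵀ * M * S) *ᵥ u) := by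
    intro u
    rw [mulVec_mulVec, hSdot, mulVec_mulVec, ← Matrix.mul_assoc]
  -- the family of the r lowest eigenvectors of M
  set ρ : Fin k := ⟨r - 1, by omega⟩ with hρ
  set f : Fin r → Fin k → ℝ := fun t => w ⟨t, by omega⟩ with hf
  have hfo : ∀ a b, f a ⬝ᵥ f b = if a = b then (1 : ℝ) else 0 := by
    intro a b
    simp only [hf, horth]
    congr 1
    simp [Fin.ext_iff]
  have hfe : ∀ t : Fin r, M *ᵥ f t = m ⟨(t : ℕ), by omega⟩ • f t := fun t => heig _
  set W : Submodule ℝ (Fin k → ℝ) := Submodule.span ℝ (Set.range f) with hW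
  have hWr : Module.finrank ℝ W = r := by
    rw [hW, finrank_span_eq_card (on_li hfo), Fintype.card_fin]
  have hfk : Module.finrank ℝ (Fin k → ℝ) = k := by
    rw [Module.finrank_pi, Fintype.card_fin]
  have hfd : Module.finrank ℝ (Fin d → ℝ) = d := by
    rw [Module.finrank_pi, Fintype.card_fin]
  -- quadratic form bound on W
  have hWform : ∀ b : Fin r → ℝ,
      (∑ t, b t • f t) ⬝ᵥ (M *ᵥ ∑ t, b t • f t) = ∑ t : Fin r, m ⟨(t : ℕ), by omega⟩ * (b t) ^ 2 :=
    fun b => quad M hfo _ hfe b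
  constructor
  · -- part 1
    intro i hi
    have hid : (i : ℕ) < d := i.2
    -- family of the top (d - i) eigenvectors of the compression, pushed into ℝ^k
    set g : Fin (d - (i : ℕ)) → Fin d → ℝ :=
      fun j => w' ⟨(i : ℕ) + (j : ℕ), by have := j.2; omega⟩ with hg
    have hgo : ∀ a b, g a ⬝ᵥ g b = if a = b then (1 : ℝ) else 0 := by
      intro a b
      simp only [hg, horth']
      congr 1
      simp [Fin.ext_iff]
    set u : Fin (d - (i : ℕ)) → Fin k → ℝ := fun j => S *ᵥ g j with hu
    have huo : ∀ a b, u a ⬝ᵥ u b = if a = b then (1 : ℝ) else 0 := by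
      intro a b
      rw [hu]
      simp only
      rw [hSS]
      exact hgo a b
    set V : Submodule ℝ (Fin k → ℝ) := Submodule.span ℝ (Set.range u) with hV
    have hVr : Module.finrank ℝ V = d - (i : ℕ) := by
      rw [hV, finrank_span_eq_card (on_li huo), Fintype.card_fin]
    -- intersection is nonzero
    have hsum := Submodule.finrank_sup_add_finrank_inf_eq V W
    have hsup : Module.finrank ℝ ↥(V ⊔ W) ≤ k := le_of_le_of_eq (Submodule.finrank_le _) hfk
    have hpos : 0 < Module.finrank ℝ ↥(V ⊓ W) := by
      rw [hVr, hWr] at hsum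
      omega
    have : Nontrivial ↥(V ⊓ W) := Module.nontrivial_of_finrank_pos hpos
    obtain ⟨x, hx0⟩ := exists_ne (0 : ↥(V ⊓ W))
    have hx0' : (x : Fin k → ℝ) ≠ 0 := fun h => hx0 (Subtype.ext h)
    have hxV : (x : Fin k → ℝ) ∈ V := x.2.1
    have hxW : (x : Fin k → ℝ) ∈ W := x.2.2
    obtain ⟨a, ha⟩ := (Submodule.mem_span_range_iff_exists_fun ℝ).mp hxV
    obtain ⟨b, hb⟩ := (Submodule.mem_span_range_iff_exists_fun ℝ).mp hxW
    -- W-side bound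
    have e1 : (x : Fin k → ℝ) ⬝ᵥ (M *ᵥ x) = ∑ t : Fin r, m ⟨(t : ℕ), by omega⟩ * (b t) ^ 2 := by
      rw [← hb]; exact hWform b
    have e2 : (x : Fin k → ℝ) ⬝ᵥ x = ∑ t : Fin r, (b t) ^ 2 := by
      rw [← hb]; exact normsq hfo b
    have bound1 : (x : Fin k → ℝ) ⬝ᵥ (M *ᵥ x) ≤ m ρ * ((x : Fin k → ℝ) ⬝ᵥ x) := by
      rw [e1, e2, Finset.mul_sum]
      refine Finset.sum_le_sum fun t _ => ?_
      refine mul_le_mul_of_nonneg_right (hmono ?_) (sq_nonneg _)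
      simp only [Fin.le_def, hρ]
      have := t.2
      omega
    -- V-side bound
    have hx : (x : Fin k → ℝ) = S *ᵥ (∑ j, a j • g j) := by
      rw [← ha, ← mulVecLin_apply, map_sum]
      refine Finset.sum_congr rfl fun j _ => ?_
      rw [LinearMap.map_smul, mulVecLin_apply]
    have e3 : (x : Fin k → ℝ) ⬝ᵥ (M *ᵥ x) =
        ∑ j : Fin (d - (i : ℕ)), m' ⟨(i : ℕ) + (j : ℕ), by have := j.2; omega⟩ * (a j) ^ 2 := by
      rw [hx, hquadS]
      exact quad (Sᵀ * M * S) hgo _ (fun j => heig' _) a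
    have e4 : (x : Fin k → ℝ) ⬝ᵥ x = ∑ j : Fin (d - (i : ℕ)), (a j) ^ 2 := by
      rw [hx, hSS]
      exact normsq hgo a
    have bound2 : m' i * ((x : Fin k → ℝ) ⬝ᵥ x) ≤ (x : Fin k → ℝ) ⬝ᵥ (M *ᵥ x) := by
      rw [e3, e4, Finset.mul_sum]
      refine Finset.sum_le_sum fun j _ => ?_
      refine mul_le_mul_of_nonneg_right (hmono' ?_) (sq_nonneg _)
      simp only [Fin.le_def]
      omega
    have posx : 0 < (x : Fin k → ℝ) ⬝ᵥ x := by
      rcases lt_or_eq_of_le (by rw [e4]; exact Finset.sum_nonneg fun j _ => sq_nonneg _ :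
        (0 : ℝ) ≤ (x : Fin k → ℝ) ⬝ᵥ x) with h | h
      · exact h
      · exact absurd (dotProduct_self_eq_zero.mp h.symm) hx0'
    exact le_of_mul_le_mul_right (bound2.trans bound1) posx
  · -- part 2
    intro h0
    haveI : Nonempty (Fin d) := ⟨⟨0, by omega⟩⟩
    have hm'0 : ∀ j : Fin d, 0 ≤ m' j := by
      intro j
      rw [← h0]
      exact hmono' (by simp [Fin.le_def])
    have spantop : Submodule.span ℝ (Set.range w') = ⊤ :=
      (on_li horth').span_eq_top_of_card_eq_finrank (by rw [Fintype.card_fin, hfd])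
    have hposq : ∀ u : Fin d → ℝ, 0 ≤ (S *ᵥ u) ⬝ᵥ (M *ᵥ (S *ᵥ u)) := by
      intro u
      have hu : u ∈ Submodule.span ℝ (Set.range w') := spantop ▸ Submodule.mem_top
      obtain ⟨c, hc⟩ := (Submodule.mem_span_range_iff_exists_fun ℝ).mp hu
      rw [← hc, hquadS, quad (Sᵀ * M * S) horth' m' heig' c]
      exact Finset.sum_nonneg fun j _ => mul_nonneg (hm'0 j) (sq_nonneg _)
    set 𝒮 : Submodule ℝ (Fin k → ℝ) := LinearMap.range (Matrix.mulVecLin S) with h𝒮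
    have hinj : Function.Injective (Matrix.mulVecLin S) := by
      rw [← LinearMap.ker_eq_bot]
      ext a
      simp only [LinearMap.mem_ker, Submodule.mem_bot, mulVecLin_apply]
      constructor
      · intro h
        have : a ⬝ᵥ a = 0 := by rw [← hSS a a, h, dotProduct_zero]
        exact dotProduct_self_eq_zero.mp this
      · intro h; rw [h, mulVec_zero]
    have h𝒮d : Module.finrank ℝ 𝒮 = d := by
      rw [h𝒮, LinearMap.finrank_range_of_inj hinj, hfd]
    -- 𝒮 ⊓ W has dimension ≥ r + d - k
    have hsum := Submodule.finrank_sup_add_finrank_inf_eq 𝒮 W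
    have hsup : Module.finrank ℝ ↥(𝒮 ⊔ W) ≤ k := le_of_le_of_eq (Submodule.finrank_le _) hfk
    have hdim : r + d - k ≤ Module.finrank ℝ ↥(𝒮 ⊓ W) := by
      rw [h𝒮d, hWr] at hsum
      omega
    -- 𝒮 ⊓ W ⊆ ker M
    have hle : 𝒮 ⊓ W ≤ 𝒮 ⊓ LinearMap.ker (Matrix.mulVecLin M) := by
      intro x hx
      rw [Submodule.mem_inf] at hx ⊢
      obtain ⟨hxS, hxW⟩ := hx
      refine ⟨hxS, ?_⟩
      obtain ⟨u, hu⟩ := hxS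
      rw [mulVecLin_apply] at hu
      obtain ⟨b, hb⟩ := (Submodule.mem_span_range_iff_exists_fun ℝ).mp hxW
      have e1 : x ⬝ᵥ (M *ᵥ x) = ∑ t : Fin r, m ⟨(t : ℕ), by omega⟩ * (b t) ^ 2 := by
        rw [← hb]; exact hWform b
      have e5 : 0 ≤ x ⬝ᵥ (M *ᵥ x) := by rw [← hu]; exact hposq u
      have hterm : ∀ t : Fin r, m (⟨(t : ℕ), by omega⟩ : Fin k) * (b t) ^ 2 ≤ 0 := by
        intro t
        refine mul_nonpos_of_nonpos_of_nonneg ?_ (sq_nonneg _)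
        refine le_trans (hmono ?_) hmr
        simp only [Fin.le_def, hρ]
        have := t.2
        omega
      have sum0 : ∑ t : Fin r, m (⟨(t : ℕ), by omega⟩ : Fin k) * (b t) ^ 2 = 0 :=
        le_antisymm (Finset.sum_nonpos fun t _ => hterm t) (e1 ▸ e5)
      have each0 := (Finset.sum_eq_zero_iff_of_nonpos fun t _ => hterm t).mp sum0
      -- M x = 0
      rw [LinearMap.mem_ker, mulVecLin_apply, ← hb, ← mulVecLin_apply, map_sum]
      refine Finset.sum_eq_zero fun t _ => ?_
      rw [LinearMap.map_smul, mulVecLin_apply, hfe, smul_smul]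
      have h2 := each0 t (Finset.mem_univ t)
      have h3 : b t * m ⟨(t : ℕ), by omega⟩ = 0 := by
        rcases mul_eq_zero.mp h2 with h | h
        · rw [h, mul_zero]
        · rw [pow_eq_zero_iff (by norm_num) |>.mp h, zero_mul]
      rw [h3, zero_smul]
    calc r + d - k ≤ Module.finrank ℝ ↥(𝒮 ⊓ W) := hdim
      _ ≤ Module.finrank ℝ ↥(𝒮 ⊓ LinearMap.ker (Matrix.mulVecLin M)) :=
          Submodule.finrank_mono hle
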